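/- Let k ≥ 1 and m ≥ 1 be integers. Then the alternating sum of m-th powers of consecutive integers satisfies Euler's formula ∑_{l=0}^{k−1} (−1)^l · l^m = ( (−1)^{k+1} · E_m(k) + E_m ) / 2, where E_m are the ordinary Euler numbers and E_m(x) are the ordinary Euler polynomials. -/

import Mathlib

open Filter Finset Topology

lemma choose_swap (m i j : ℕ) :
    m.choose i * (m - i).choose j = m.choose j * (m - j).choose i := by
  by_cases h : i + j ≤ m
  · have h1 := Nat.choose_mul (n := m) (Nat.le_add_right i j)
    have h2 := Nat.choose_mul (n := m) (Nat.le_add_left j i)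
    rw [Nat.add_sub_cancel_left] at h1
    rw [Nat.add_sub_cancel] at h2
    have hsym : (i + j).choose i = (i + j).choose j := by
      rw [← Nat.choose_symm (Nat.le_add_right i j), Nat.add_sub_cancel_left]
    rw [← h1, ← h2, hsym]
  · push_neg at h
    have z1 : m.choose i * (m - i).choose j = 0 := by
      by_cases hi : i ≤ m
      · rw [Nat.choose_eq_zero_of_lt (by omega : m - i < j), Nat.mul_zero]
      · rw [Nat.choose_eq_zero_of_lt (by omega), Nat.zero_mul]
    have z2 : m.choose j * (m - j).choose i = 0 := by
      by_cases hj : j ≤ m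
      · rw [Nat.choose_eq_zero_of_lt (by omega : m - j < i), Nat.mul_zero]
      · rw [Nat.choose_eq_zero_of_lt (by omega), Nat.zero_mul]
    rw [z1, z2]

lemma euler_poly_key (E : ℕ → ℝ) (hE0 : E 0 = 1)
    (hE : ∀ n : ℕ, 1 ≤ n →
      (∑ j ∈ Finset.range (n+1), (n.choose j : ℝ) * E j) + E n = 0)
    (m : ℕ) (x : ℝ) :
    (∑ i ∈ Finset.range (m+1), (m.choose i : ℝ) * E i * (x+1)^(m-i))
      + (∑ i ∈ Finset.range (m+1), (m.choose i : ℝ) * E i * x^(m-i)) = 2 * x^m := by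
  have expand : ∀ i ∈ Finset.range (m+1),
      (m.choose i : ℝ) * E i * (x+1)^(m-i)
        = ∑ j ∈ Finset.range (m+1),
            (m.choose i : ℝ) * E i * (((m-i).choose j : ℝ) * x^j) := by
    intro i hi
    simp only [Finset.mem_range] at hi
    calc (m.choose i : ℝ) * E i * (x+1)^(m-i)
        = ∑ j ∈ Finset.range (m-i+1),
            (m.choose i : ℝ) * E i * (((m-i).choose j : ℝ) * x^j) := by
          rw [add_pow, Finset.mul_sum]
          apply Finset.sum_congr rfl
          intro j hj
          ring
      _ = ∑ j ∈ Finset.range (m+1),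
            (m.choose i : ℝ) * E i * (((m-i).choose j : ℝ) * x^j) := by
          apply Finset.sum_subset (Finset.range_subset_range.2 (by omega : m-i+1 ≤ m+1))
          intro j hj hj2
          simp only [Finset.mem_range, not_lt] at hj2
          rw [Nat.choose_eq_zero_of_lt (by omega : m - i < j)]
          simp
  rw [Finset.sum_congr rfl expand, Finset.sum_comm]
  have inner : ∀ j ∈ Finset.range (m+1),
      (∑ i ∈ Finset.range (m+1), (m.choose i : ℝ) * E i * (((m-i).choose j : ℝ) * x^j))
        = (m.choose j : ℝ) * x^j *
            (∑ i ∈ Finset.range (m-j+1), ((m-j).choose i : ℝ) * E i) := by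
    intro j hj
    simp only [Finset.mem_range] at hj
    rw [Finset.mul_sum]
    calc (∑ i ∈ Finset.range (m+1), (m.choose i : ℝ) * E i * (((m-i).choose j : ℝ) * x^j))
        = ∑ i ∈ Finset.range (m+1), (m.choose j : ℝ) * x^j * (((m-j).choose i : ℝ) * E i) := by
          apply Finset.sum_congr rfl
          intro i hi
          have hcs : (m.choose i : ℝ) * ((m-i).choose j : ℝ)
              = (m.choose j : ℝ) * ((m-j).choose i : ℝ) := by
            exact_mod_cast congrArg (Nat.cast (R := ℝ)) (choose_swap m i j)
          calc (m.choose i : ℝ) * E i * (((m-i).choose j : ℝ) * x^j)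
              = (m.choose i : ℝ) * ((m-i).choose j : ℝ) * (E i * x^j) := by ring
            _ = (m.choose j : ℝ) * ((m-j).choose i : ℝ) * (E i * x^j) := by rw [hcs]
            _ = (m.choose j : ℝ) * x^j * (((m-j).choose i : ℝ) * E i) := by ring
      _ = ∑ i ∈ Finset.range (m-j+1), (m.choose j : ℝ) * x^j * (((m-j).choose i : ℝ) * E i) := by
          symm
          apply Finset.sum_subset (Finset.range_subset_range.2 (by omega : m-j+1 ≤ m+1))
          intro i hi hi2
          simp only [Finset.mem_range, not_lt] at hi2
          rw [Nat.choose_eq_zero_of_lt (by omega : m - j < i)]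
          simp
  rw [Finset.sum_congr rfl inner]
  have reindex : (∑ i ∈ Finset.range (m+1), (m.choose i : ℝ) * E i * x^(m-i))
      = ∑ j ∈ Finset.range (m+1), (m.choose j : ℝ) * x^j * E (m-j) := by
    rw [← Finset.sum_range_reflect (fun i => (m.choose i : ℝ) * E i * x^(m-i)) (m+1)]
    apply Finset.sum_congr rfl
    intro j hj
    simp only [Finset.mem_range] at hj
    have h1 : m + 1 - 1 - j = m - j := by omega
    have h2 : m - (m - j) = j := by omega
    have h3 : m.choose (m - j) = m.choose j := Nat.choose_symm (by omega : j ≤ m)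
    simp only [h1, h2, h3]
    ring
  rw [reindex, ← Finset.sum_add_distrib]
  have combined : ∀ j ∈ Finset.range (m+1),
      (m.choose j : ℝ) * x^j * (∑ i ∈ Finset.range (m-j+1), ((m-j).choose i : ℝ) * E i)
        + (m.choose j : ℝ) * x^j * E (m-j)
      = if j = m then 2 * x^m else 0 := by
    intro j hj
    simp only [Finset.mem_range] at hj
    by_cases hjm : j = m
    · subst hjm
      simp only [Nat.sub_self, Finset.sum_range_one, Nat.choose_zero_right, Nat.cast_one,
        one_mul, hE0, Nat.choose_self, if_pos rfl]
      simp [hE0]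
      ring
    · have h1 : 1 ≤ m - j := by omega
      have := hE (m - j) h1
      rw [← mul_add, this]
      simp [hjm]
  rw [Finset.sum_congr rfl combined, Finset.sum_ite_eq' (Finset.range (m+1)) m]
  simp

theorem euler_alt_sum_powers (E : ℕ → ℝ) (hE0 : E 0 = 1)
    (hE : ∀ n : ℕ, 1 ≤ n →
      (∑ j ∈ Finset.range (n+1), (n.choose j : ℝ) * E j) + E n = 0)
    (k m : ℕ) (hk : 1 ≤ k) (hm : 1 ≤ m) :
    ∑ l ∈ Finset.range k, (-1:ℝ)^l * (l:ℝ)^m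
    = ((-1)^(k+1) * (∑ i ∈ Finset.range (m+1), (m.choose i : ℝ) * E i * (k:ℝ)^(m-i)) + E m) / 2 := by
  induction k with
  | zero => omega
  | succ n ih =>
    by_cases hn : 1 ≤ n
    · rw [Finset.sum_range_succ, ih hn]
      have key := euler_poly_key E hE0 hE m (n : ℝ)
      push_cast
      linear_combination (-(-1:ℝ)^n / 2) * key
    · have hn0 : n = 0 := by omega
      subst hn0
      have h1 := hE m hm
      have hz : (0:ℝ)^m = 0 := zero_pow (by omega)
      simp only [Finset.sum_range_one, Nat.cast_zero, hz, mul_zero, pow_zero, one_mul,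
        Nat.cast_one, one_pow, mul_one, Nat.cast_ofNat, zero_add]
      have : ∀ i ∈ Finset.range (m+1), (m.choose i : ℝ) * E i * ((0:ℕ)+1:ℝ)^(m-i)
          = (m.choose i : ℝ) * E i := by intro i _; norm_num
      norm_num
      linarith [h1]
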